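/- Fix n > 3 and let 𝒢_n be the set of isomorphism classes of simple graphs on n vertices. Let A, B, C ⊆ 𝒢_n be the classes of graphs G of order n and size m satisfying m·M1(G) > n·M2(G), m·M1(G) = n·M2(G), and m·M1(G) < n·M2(G), respectively. Then |A| + |B| < |C|. -/

import Mathlib

/-- Degree of a vertex (classical, so it works for any graph on a finite vertex type). -/
noncomputable def gdeg {V : Type*} [Fintype V] (G : SimpleGraph V) (v : V) : ℕ := by
  classical exact G.degree v

/-- First Zagreb index: sum of squares of the vertex degrees. -/
noncomputable def zagrebM1 {V : Type*} [Fintype V] (G : SimpleGraph V) : ℕ :=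
  ∑ v, gdeg G v ^ 2

/-- Second Zagreb index: sum of d(u)·d(v) over the edges uv. -/
noncomputable def zagrebM2 {V : Type*} [Fintype V] (G : SimpleGraph V) : ℕ := by
  classical exact
    ∑ e ∈ G.edgeFinset,
      Sym2.lift ⟨fun u v => gdeg G u * gdeg G v, fun u v => by simp [Nat.mul_comm]⟩ e

/-- The size (number of edges) of a graph. -/
noncomputable def gsize {V : Type*} [Fintype V] (G : SimpleGraph V) : ℕ := by
  classical exact G.edgeFinset.card

/-- A graph is `r`-regular if every vertex has degree `r`. -/
def gregOfDeg {V : Type*} [Fintype V] (G : SimpleGraph V) (r : ℕ) : Prop :=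
  ∀ v, gdeg G v = r

/-- A graph is regular if all its vertices have the same degree. -/
def gregular {V : Type*} [Fintype V] (G : SimpleGraph V) : Prop :=
  ∃ r, gregOfDeg G r

/-- The setoid identifying isomorphic simple graphs on `Fin n`. -/
def graphIsoSetoid (n : ℕ) : Setoid (SimpleGraph (Fin n)) where
  r G H := Nonempty (G ≃g H)
  iseqv := ⟨fun _ => ⟨SimpleGraph.Iso.refl⟩,
    fun ⟨f⟩ => ⟨f.symm⟩, fun ⟨f⟩ ⟨g⟩ => ⟨f.trans g⟩⟩

/-- `𝒢_n`: the type of isomorphism classes of simple graphs on `n` vertices. -/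
def IsoClasses (n : ℕ) := Quotient (graphIsoSetoid n)

/-- The set of isomorphism classes of graphs on `n` vertices satisfying a predicate. -/
def isoClassesOf (n : ℕ) (P : SimpleGraph (Fin n) → Prop) : Set (IsoClasses n) :=
  Quotient.mk (graphIsoSetoid n) '' {G | P G}

open Finset
namespace ZagrebAux
variable {n : ℕ}

noncomputable def nbr (G : SimpleGraph (Fin n)) (v : Fin n) : Finset (Fin n) := by
  classical exact Finset.univ.filter (fun w => G.Adj v w)

lemma mem_nbr {G : SimpleGraph (Fin n)} {v w : Fin n} : w ∈ nbr G v ↔ G.Adj v w := by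
  classical
  simp [nbr]

lemma gdeg_eq (G : SimpleGraph (Fin n)) (v : Fin n) : gdeg G v = (nbr G v).card := by
  have h : ∀ (inst : Fintype (G.neighborSet v)),
      (@Set.toFinset _ (G.neighborSet v) inst).card = (nbr G v).card := by
    intro inst; congr 1; ext w; simp [nbr, Set.mem_toFinset]
  unfold gdeg
  exact h _

lemma handshake (G : SimpleGraph (Fin n)) : ∑ v, gdeg G v = 2 * gsize G := by
  classical
  have h := SimpleGraph.sum_degrees_eq_twice_card_edges G
  convert h using 2
  · unfold gdeg; congr
  · unfold gsize; congr

noncomputable def dz (G : SimpleGraph (Fin n)) (v : Fin n) : ℤ := (gdeg G v : ℤ)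
noncomputable def s1 (G : SimpleGraph (Fin n)) : ℤ := ∑ v, dz G v
noncomputable def s2 (G : SimpleGraph (Fin n)) : ℤ := ∑ v, dz G v ^ 2
noncomputable def pz (G : SimpleGraph (Fin n)) : ℤ := ∑ v, ∑ w ∈ nbr G v, dz G v * dz G w
noncomputable def Fz (G : SimpleGraph (Fin n)) : ℤ :=
  (gsize G : ℤ) * (zagrebM1 G : ℤ) - (n : ℤ) * (zagrebM2 G : ℤ)

section darts
variable (G : SimpleGraph (Fin n)) [DecidableRel G.Adj]

lemma sum_darts_edge (f : Sym2 (Fin n) → ℤ) :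
    ∑ d : G.Dart, f d.edge = 2 * ∑ e ∈ G.edgeFinset, f e := by
  classical
  have key := Finset.sum_fiberwise_of_maps_to (s := (univ : Finset G.Dart))
      (t := G.edgeFinset) (g := SimpleGraph.Dart.edge)
      (fun d _ => by rw [SimpleGraph.mem_edgeFinset]; exact d.edge_mem)
      (fun d => f d.edge)
  rw [← key, Finset.mul_sum]
  refine Finset.sum_congr rfl fun e he => ?_
  have hcard : #{d : G.Dart | d.edge = e} = 2 :=
    G.dart_edge_fiber_card e (SimpleGraph.mem_edgeFinset.mp he)
  calc ∑ d ∈ ({d : G.Dart | d.edge = e} : Finset _), f d.edge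
      = ∑ _d ∈ ({d : G.Dart | d.edge = e} : Finset _), f e := by
        refine Finset.sum_congr rfl fun d hd => ?_
        simp only [Finset.mem_filter] at hd
        rw [hd.2]
    _ = 2 * f e := by rw [Finset.sum_const, hcard]; ring

lemma sum_darts_fst (F : Fin n → Fin n → ℤ) :
    ∑ d : G.Dart, F d.fst d.snd = ∑ v, ∑ w ∈ nbr G v, F v w := by
  classical
  have key := Finset.sum_fiberwise_of_maps_to (s := (univ : Finset G.Dart))
      (t := (univ : Finset (Fin n))) (g := fun d : G.Dart => d.fst)
      (fun d _ => Finset.mem_univ _) (fun d => F d.fst d.snd)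
  rw [← key]
  refine Finset.sum_congr rfl fun v _ => ?_
  rw [show (Finset.filter (fun d : G.Dart => d.fst = v) Finset.univ)
      = ({d : G.Dart | d.fst = v} : Finset _) from rfl]
  rw [SimpleGraph.dart_fst_fiber]
  rw [Finset.sum_image (by
    intro a _ b _ hab
    exact (G.dartOfNeighborSet_injective v) hab)]
  have h2 : ∀ a : G.neighborSet v,
      F (G.dartOfNeighborSet v a).fst (G.dartOfNeighborSet v a).snd = F v a.1 := fun a => rfl
  rw [Finset.sum_congr rfl (fun a _ => h2 a)]
  exact (Finset.sum_subtype (nbr G v)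
    (fun w => by rw [mem_nbr]; exact Iff.rfl) (fun w => F v w)).symm

lemma sum_darts_symm (F : Fin n → Fin n → ℤ) :
    ∑ d : G.Dart, F d.fst d.snd = ∑ d : G.Dart, F d.snd d.fst := by
  rw [← Function.Bijective.sum_comp
    (Function.Involutive.bijective (SimpleGraph.Dart.symm_involutive (G := G)))
    (fun d : G.Dart => F d.snd d.fst)]
  exact Finset.sum_congr rfl fun d _ => rfl

lemma swap_sum (F : Fin n → Fin n → ℤ) :
    ∑ v, ∑ w ∈ nbr G v, F v w = ∑ v, ∑ w ∈ nbr G v, F w v := by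
  rw [← sum_darts_fst, ← sum_darts_fst, sum_darts_symm]

end darts

lemma swap_sum' (G : SimpleGraph (Fin n)) (F : Fin n → Fin n → ℤ) :
    ∑ v, ∑ w ∈ nbr G v, F v w = ∑ v, ∑ w ∈ nbr G v, F w v := by
  classical exact swap_sum G F

lemma sum_nbr_const (G : SimpleGraph (Fin n)) (v : Fin n) (c : ℤ) :
    ∑ _w ∈ nbr G v, c = dz G v * c := by
  rw [Finset.sum_const, nsmul_eq_mul, dz, gdeg_eq]

lemma sum_sum_snd (G : SimpleGraph (Fin n)) (φ : Fin n → ℤ) :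
    ∑ v, ∑ w ∈ nbr G v, φ w = ∑ v, dz G v * φ v := by
  rw [swap_sum' G (fun _ w => φ w)]
  exact Finset.sum_congr rfl fun v _ => sum_nbr_const G v (φ v)

lemma inner_sum_eq_s2 (G : SimpleGraph (Fin n)) :
    ∑ v, ∑ w ∈ nbr G v, dz G w = s2 G := by
  rw [sum_sum_snd]
  exact Finset.sum_congr rfl fun v _ => (sq (dz G v) ▸ (pow_two (dz G v)).symm)

-- bridges
lemma s1_eq (G : SimpleGraph (Fin n)) : s1 G = 2 * (gsize G : ℤ) := by
  unfold s1 dz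
  rw [← Nat.cast_sum]
  exact_mod_cast handshake G

lemma s2_eq (G : SimpleGraph (Fin n)) : s2 G = (zagrebM1 G : ℤ) := by
  unfold s2 dz zagrebM1
  push_cast
  rfl

lemma pz_eq (G : SimpleGraph (Fin n)) : pz G = 2 * (zagrebM2 G : ℤ) := by
  classical
  have h1 : (zagrebM2 G : ℤ) = ∑ e ∈ G.edgeFinset,
      Sym2.lift ⟨fun u v => (dz G u * dz G v : ℤ), fun u v => by ring⟩ e := by
    unfold zagrebM2
    rw [Nat.cast_sum]
    refine Finset.sum_congr (by convert rfl) fun e he => ?_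
    induction e with
    | _ u v => simp [dz]
  have h2 := sum_darts_edge G (Sym2.lift ⟨fun u v => (dz G u * dz G v : ℤ), fun u v => by ring⟩)
  have h3 : ∀ d : G.Dart,
      Sym2.lift ⟨fun u v => (dz G u * dz G v : ℤ), fun u v => by ring⟩ d.edge
        = dz G d.fst * dz G d.snd := fun d => rfl
  rw [Finset.sum_congr rfl (fun d _ => h3 d)] at h2
  rw [sum_darts_fst G (fun v w => dz G v * dz G w)] at h2
  rw [h1, ← h2]
  rfl

lemma two_Fz (G : SimpleGraph (Fin n)) : 2 * Fz G = s1 G * s2 G - (n : ℤ) * pz G := by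
  rw [s1_eq, s2_eq, pz_eq, Fz]
  ring

-- complement
lemma nbr_compl (G : SimpleGraph (Fin n)) (v : Fin n) :
    nbr Gᶜ v = univ \ insert v (nbr G v) := by
  ext w
  simp only [mem_nbr, SimpleGraph.compl_adj, Finset.mem_sdiff, Finset.mem_univ, true_and,
    Finset.mem_insert, mem_nbr]
  constructor
  · rintro ⟨hne, hna⟩ h
    rcases h with h | h
    · exact hne (h ▸ rfl)
    · exact hna h
  · intro h
    exact ⟨fun hvw => h (Or.inl hvw.symm), fun ha => h (Or.inr ha)⟩

lemma dz_compl (G : SimpleGraph (Fin n)) (v : Fin n) :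
    dz Gᶜ v = (n : ℤ) - 1 - dz G v := by
  have hv : v ∉ nbr G v := fun h => G.irrefl (mem_nbr.mp h)
  have hsub : insert v (nbr G v) ⊆ univ := Finset.subset_univ _
  have hc := Finset.card_sdiff_add_card_eq_card hsub
  have hins : (insert v (nbr G v)).card = (nbr G v).card + 1 := by
    rw [Finset.card_insert_of_notMem hv]
  unfold dz
  rw [gdeg_eq, gdeg_eq, nbr_compl]
  have hcu : (univ : Finset (Fin n)).card = n := by simp
  omega

lemma s1_compl (G : SimpleGraph (Fin n)) : s1 Gᶜ = (n : ℤ) * (n - 1) - s1 G := by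
  unfold s1
  rw [Finset.sum_congr rfl (fun v _ => dz_compl G v), Finset.sum_sub_distrib,
    Finset.sum_sub_distrib, Finset.sum_const, Finset.card_univ, Fintype.card_fin,
    nsmul_eq_mul, Finset.sum_const, Finset.card_univ, Fintype.card_fin, nsmul_eq_mul]
  ring

lemma s2_compl (G : SimpleGraph (Fin n)) :
    s2 Gᶜ = (n : ℤ) * (n - 1) ^ 2 - 2 * (n - 1) * s1 G + s2 G := by
  unfold s2
  rw [Finset.sum_congr rfl (fun v _ => by rw [dz_compl G v]; ring_nf :
    ∀ v ∈ univ, dz Gᶜ v ^ 2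
      = ((n:ℤ) - 1) ^ 2 - 2 * ((n:ℤ) - 1) * dz G v + dz G v ^ 2)]
  rw [Finset.sum_add_distrib, Finset.sum_sub_distrib, Finset.sum_const, ← Finset.mul_sum,
    Finset.card_univ, Fintype.card_fin, nsmul_eq_mul]
  simp only [s1, s2]

lemma X_eq (G : SimpleGraph (Fin n)) :
    ∑ v, ∑ w ∈ nbr G v, dz Gᶜ v * dz Gᶜ w
      = ((n:ℤ)-1)^2 * s1 G - 2*((n:ℤ)-1)*s2 G + pz G := by
  have hterm : ∀ v w : Fin n, dz Gᶜ v * dz Gᶜ w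
      = (((n:ℤ)-1)^2 - ((n:ℤ)-1)*dz G w - ((n:ℤ)-1)*dz G v + dz G v * dz G w) := by
    intro v w; rw [dz_compl, dz_compl]; ring
  rw [Finset.sum_congr rfl (fun v _ => Finset.sum_congr rfl (fun w _ => hterm v w))]
  simp only [Finset.sum_add_distrib, Finset.sum_sub_distrib]
  have h1 : ∑ v, ∑ _w ∈ nbr G v, ((n:ℤ)-1)^2 = s1 G * ((n:ℤ)-1)^2 := by
    rw [Finset.sum_congr rfl (fun v _ => sum_nbr_const G v _), ← Finset.sum_mul]; rfl
  have h2 : ∑ v, ∑ w ∈ nbr G v, ((n:ℤ)-1) * dz G w = ((n:ℤ)-1) * s2 G := by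
    rw [Finset.sum_congr rfl (fun v _ => (Finset.mul_sum (nbr G v) (dz G) ((n:ℤ)-1)).symm),
      ← Finset.mul_sum, inner_sum_eq_s2]
  have h3 : ∑ v, ∑ _w ∈ nbr G v, ((n:ℤ)-1) * dz G v = ((n:ℤ)-1) * s2 G := by
    rw [Finset.sum_congr rfl (fun v _ => sum_nbr_const G v _)]
    rw [Finset.sum_congr rfl (fun v _ => by ring :
      ∀ v ∈ univ, dz G v * (((n:ℤ)-1) * dz G v) = ((n:ℤ)-1) * dz G v ^ 2)]
    rw [← Finset.mul_sum]; rfl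
  rw [h1, h2, h3]
  have h4 : ∑ v, ∑ w ∈ nbr G v, dz G v * dz G w = pz G := rfl
  rw [h4]; ring

lemma pz_compl (G : SimpleGraph (Fin n)) :
    pz Gᶜ = s1 Gᶜ * s1 Gᶜ - s2 Gᶜ
      - (((n:ℤ)-1)^2 * s1 G - 2*((n:ℤ)-1)*s2 G + pz G) := by
  have per : ∀ v, ∑ w ∈ nbr Gᶜ v, dz Gᶜ v * dz Gᶜ w
      = dz Gᶜ v * s1 Gᶜ - dz Gᶜ v * dz Gᶜ v - ∑ w ∈ nbr G v, dz Gᶜ v * dz Gᶜ w := by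
    intro v
    have hv : v ∉ nbr G v := fun h => G.irrefl (mem_nbr.mp h)
    rw [nbr_compl, Finset.sum_sdiff_eq_sub (Finset.subset_univ _), Finset.sum_insert hv,
      ← Finset.mul_sum]
    simp only [s1]
    ring
  show ∑ v, ∑ w ∈ nbr Gᶜ v, dz Gᶜ v * dz Gᶜ w = _
  rw [Finset.sum_congr rfl (fun v _ => per v)]
  simp only [Finset.sum_sub_distrib]
  rw [← Finset.sum_mul, X_eq]
  have : ∑ v, dz Gᶜ v * dz Gᶜ v = s2 Gᶜ := by
    rw [Finset.sum_congr rfl (fun v _ => (pow_two (dz Gᶜ v)).symm ▸ rfl :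
      ∀ v ∈ univ, dz Gᶜ v * dz Gᶜ v = dz Gᶜ v ^ 2)]
    rfl
  rw [this]
  rfl

lemma key_identity (G : SimpleGraph (Fin n)) :
    2 * Fz G + 2 * Fz Gᶜ = -((n:ℤ)-2) * ((n:ℤ) * s2 G - s1 G ^ 2) := by
  rw [two_Fz, two_Fz, pz_compl, s1_compl, s2_compl]
  ring

lemma cs_strict (G : SimpleGraph (Fin n)) (hn : 0 < n)
    (h : ¬∃ r, ∀ v, gdeg G v = r) :
    0 < (n:ℤ) * s2 G - s1 G ^ 2 := by
  have ident : ∑ u, ∑ v, (dz G u - dz G v)^2 = 2*(n:ℤ)*s2 G - 2*s1 G^2 := by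
    have hterm : ∀ u v : Fin n, (dz G u - dz G v)^2
        = dz G u^2 - 2*(dz G u * dz G v) + dz G v^2 := by intro u v; ring
    rw [Finset.sum_congr rfl (fun u _ => Finset.sum_congr rfl (fun v _ => hterm u v))]
    simp only [Finset.sum_add_distrib, Finset.sum_sub_distrib, Finset.sum_const,
      Finset.card_univ, Fintype.card_fin, nsmul_eq_mul, ← Finset.mul_sum]
    have hs : ∑ u, dz G u * s1 G = s1 G ^ 2 := by
      rw [← Finset.sum_mul]; simp only [s1]; ring
    simp only [s1, s2] at *
    rw [hs]
    ring
  push_neg at h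
  obtain ⟨u0, hu0⟩ := h (gdeg G ⟨0, hn⟩)
  have hne : dz G u0 - dz G ⟨0, hn⟩ ≠ 0 := by
    simp only [dz, sub_ne_zero]
    exact_mod_cast hu0
  have hpos : 0 < (dz G u0 - dz G ⟨0, hn⟩)^2 := by positivity
  have h2 : (dz G u0 - dz G ⟨0, hn⟩)^2 ≤ ∑ v, (dz G u0 - dz G v)^2 :=
    Finset.single_le_sum (f := fun v => (dz G u0 - dz G v)^2)
      (fun v _ => sq_nonneg _) (Finset.mem_univ _)
  have h3 : ∑ v, (dz G u0 - dz G v)^2 ≤ ∑ u, ∑ v, (dz G u - dz G v)^2 :=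
    Finset.single_le_sum (f := fun u => ∑ v, (dz G u - dz G v)^2)
      (fun u _ => Finset.sum_nonneg (fun v _ => sq_nonneg _))
      (Finset.mem_univ _)
  linarith

section delete
variable {G : SimpleGraph (Fin n)} {r : ℕ} {u v : Fin n}

lemma nbr_del_eq (huv : G.Adj u v) (x : Fin n) (hxu : x ≠ u) (hxv : x ≠ v) :
    nbr (G.deleteEdges {s(u,v)}) x = nbr G x := by
  ext w
  simp only [mem_nbr, SimpleGraph.deleteEdges_adj, Set.mem_singleton_iff, Sym2.eq_iff]
  constructor
  · exact fun h => h.1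
  · intro h
    refine ⟨h, fun hc => ?_⟩
    rcases hc with ⟨h1, _⟩ | ⟨h1, _⟩
    · exact hxu h1
    · exact hxv h1

lemma nbr_del_u (huv : G.Adj u v) :
    nbr (G.deleteEdges {s(u,v)}) u = (nbr G u).erase v := by
  have hne : u ≠ v := G.ne_of_adj huv
  ext w
  simp only [mem_nbr, SimpleGraph.deleteEdges_adj, Set.mem_singleton_iff, Sym2.eq_iff,
    Finset.mem_erase, mem_nbr]
  aesop

lemma nbr_del_v (huv : G.Adj u v) :
    nbr (G.deleteEdges {s(u,v)}) v = (nbr G v).erase u := by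
  have hne : u ≠ v := G.ne_of_adj huv
  ext w
  simp only [mem_nbr, SimpleGraph.deleteEdges_adj, Set.mem_singleton_iff, Sym2.eq_iff,
    Finset.mem_erase, mem_nbr]
  aesop

/-- the indicator of `{u, v}` -/
noncomputable def cz (u v x : Fin n) : ℤ := if x = u ∨ x = v then 1 else 0

lemma dz_del (hreg : ∀ x, gdeg G x = r) (huv : G.Adj u v) (x : Fin n) :
    dz (G.deleteEdges {s(u,v)}) x = (r : ℤ) - cz u v x := by
  have hne : u ≠ v := G.ne_of_adj huv
  unfold dz cz
  by_cases hxu : x = u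
  · subst hxu
    rw [gdeg_eq, nbr_del_u huv, Finset.card_erase_of_mem (mem_nbr.mpr huv), ← gdeg_eq, hreg]
    have hr : 1 ≤ r := by
      rw [← hreg x, gdeg_eq]
      exact Finset.card_pos.mpr ⟨v, mem_nbr.mpr huv⟩
    simp only [true_or, if_true]
    push_cast [hr]
    ring
  · by_cases hxv : x = v
    · subst hxv
      rw [gdeg_eq, nbr_del_v huv, Finset.card_erase_of_mem (mem_nbr.mpr huv.symm), ← gdeg_eq,
        hreg]
      have hr : 1 ≤ r := by
        rw [← hreg x, gdeg_eq]
        exact Finset.card_pos.mpr ⟨u, mem_nbr.mpr huv.symm⟩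
      simp only [or_true, if_true]
      push_cast [hr]
      ring
    · rw [gdeg_eq, nbr_del_eq huv x hxu hxv, ← gdeg_eq, hreg]
      simp only [hxu, hxv, or_self, if_false]
      ring

lemma sum_cz (hne : u ≠ v) : ∑ x, cz u v x = 2 := by
  have hsplit : ∀ x, cz u v x
      = (if x = u then (1:ℤ) else 0) + (if x = v then (1:ℤ) else 0) := by
    intro x
    unfold cz
    by_cases hxu : x = u
    · subst hxu
      simp [hne]
    · by_cases hxv : x = v
      · subst hxv
        simp [hxu, (Ne.symm hne)]
      · simp [hxu, hxv]
  rw [Finset.sum_congr rfl (fun x _ => hsplit x), Finset.sum_add_distrib]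
  simp

lemma cz_sq (x : Fin n) : cz u v x ^ 2 = cz u v x := by
  unfold cz; split_ifs <;> ring

lemma cz_u : cz u v u = 1 := by simp [cz]
lemma cz_v : cz u v v = 1 := by simp [cz]

lemma s1_del (hreg : ∀ x, gdeg G x = r) (huv : G.Adj u v) :
    s1 (G.deleteEdges {s(u,v)}) = (n : ℤ) * r - 2 := by
  unfold s1
  rw [Finset.sum_congr rfl (fun x _ => dz_del hreg huv x), Finset.sum_sub_distrib,
    sum_cz (G.ne_of_adj huv)]
  simp [Finset.card_univ]

lemma s2_del (hreg : ∀ x, gdeg G x = r) (huv : G.Adj u v) :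
    s2 (G.deleteEdges {s(u,v)}) = (n : ℤ) * r^2 - 4*r + 2 := by
  unfold s2
  have hterm : ∀ x, ((r:ℤ) - cz u v x)^2 = (r:ℤ)^2 - 2*(r:ℤ)*cz u v x + cz u v x := by
    intro x
    have := cz_sq (u := u) (v := v) x
    nlinarith [this]
  rw [Finset.sum_congr rfl (fun x _ => by rw [dz_del hreg huv x, hterm x]),
    Finset.sum_add_distrib, Finset.sum_sub_distrib, sum_cz (G.ne_of_adj huv),
    ← Finset.mul_sum, sum_cz (G.ne_of_adj huv)]
  simp only [Finset.sum_const, Finset.card_univ, Fintype.card_fin, nsmul_eq_mul]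
  ring

lemma inner_del_u (hreg : ∀ x, gdeg G x = r) (huv : G.Adj u v) :
    ∑ w ∈ nbr (G.deleteEdges {s(u,v)}) u, dz (G.deleteEdges {s(u,v)}) w
      = (r:ℤ) * ((r:ℤ) - 1) := by
  set H := G.deleteEdges {s(u,v)} with hH
  have hmem : ∀ w ∈ nbr H u, dz H w = (r : ℤ) := by
    intro w hw
    rw [dz_del hreg huv w]
    have hwu : w ≠ u := fun h =>
      H.irrefl (h ▸ (mem_nbr.mp hw)).symm
    have hwv : w ≠ v := by
      rw [hH, nbr_del_u huv] at hw
      exact (Finset.mem_erase.mp hw).1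
    simp [cz, hwu, hwv]
  rw [Finset.sum_congr rfl hmem, Finset.sum_const, nsmul_eq_mul, ← gdeg_eq]
  have hd : (gdeg H u : ℤ) = (r:ℤ) - 1 := by
    have h := dz_del (u := u) (v := v) hreg huv u
    rw [cz_u] at h
    unfold dz at h
    rw [h]
  rw [hd]
  ring

lemma inner_del_v (hreg : ∀ x, gdeg G x = r) (huv : G.Adj u v) :
    ∑ w ∈ nbr (G.deleteEdges {s(u,v)}) v, dz (G.deleteEdges {s(u,v)}) w
      = (r:ℤ) * ((r:ℤ) - 1) := by
  have h := inner_del_u (u := v) (v := u) hreg huv.symm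
  rw [show s(v,u) = s(u,v) from Sym2.eq_swap] at h
  exact h

lemma pz_del (hreg : ∀ x, gdeg G x = r) (huv : G.Adj u v) :
    pz (G.deleteEdges {s(u,v)}) = (r:ℤ) * s2 (G.deleteEdges {s(u,v)})
      - 2*(r:ℤ)*((r:ℤ)-1) := by
  set H := G.deleteEdges {s(u,v)} with hH
  have hne : u ≠ v := G.ne_of_adj huv
  unfold pz
  have hmul : ∀ x, ∑ w ∈ nbr H x, dz H x * dz H w
      = dz H x * ∑ w ∈ nbr H x, dz H w := fun x => (Finset.mul_sum _ _ _).symm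
  rw [Finset.sum_congr rfl (fun x _ => hmul x)]
  have hsplit : ∀ x, dz H x * ∑ w ∈ nbr H x, dz H w
      = (r:ℤ) * ∑ w ∈ nbr H x, dz H w - cz u v x * ∑ w ∈ nbr H x, dz H w := by
    intro x
    rw [dz_del hreg huv x]
    ring
  rw [Finset.sum_congr rfl (fun x _ => hsplit x), Finset.sum_sub_distrib, ← Finset.mul_sum,
    inner_sum_eq_s2]
  have hcz : ∀ x, cz u v x * ∑ w ∈ nbr H x, dz H w
      = (if x = u then ∑ w ∈ nbr H u, dz H w else 0)
        + (if x = v then ∑ w ∈ nbr H v, dz H w else 0) := by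
    intro x
    by_cases hxu : x = u
    · subst hxu
      simp [cz, hne]
    · by_cases hxv : x = v
      · subst hxv
        simp [cz, hxu, Ne.symm hne]
      · simp [cz, hxu, hxv]
  rw [Finset.sum_congr rfl (fun x _ => hcz x), Finset.sum_add_distrib]
  rw [Finset.sum_ite_eq' Finset.univ u (fun _ => ∑ w ∈ nbr H u, dz H w)]
  rw [Finset.sum_ite_eq' Finset.univ v (fun _ => ∑ w ∈ nbr H v, dz H w)]
  simp only [Finset.mem_univ, if_true]
  rw [inner_del_u hreg huv, inner_del_v hreg huv]
  ring

lemma Fz_del (hn : 3 < n) (hreg : ∀ x, gdeg G x = r) (huv : G.Adj u v) :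
    Fz (G.deleteEdges {s(u,v)}) = 4*(r:ℤ) - (n:ℤ)*(r:ℤ) - 2 := by
  have h2 := two_Fz (G.deleteEdges {s(u,v)})
  rw [s1_del hreg huv, s2_del hreg huv, pz_del hreg huv, s2_del hreg huv] at h2
  have : 2 * Fz (G.deleteEdges {s(u,v)}) = 2 * (4*(r:ℤ) - (n:ℤ)*(r:ℤ) - 2) := by
    rw [h2]; ring
  linarith

lemma Fz_del_compl (hn : 3 < n) (hreg : ∀ x, gdeg G x = r) (huv : G.Adj u v) :
    Fz (G.deleteEdges {s(u,v)})ᶜ = (n:ℤ)*(r:ℤ) - 4*(r:ℤ) + 2 - ((n:ℤ)-2)^2 := by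
  have hk := key_identity (G.deleteEdges {s(u,v)})
  rw [s1_del hreg huv, s2_del hreg huv, Fz_del hn hreg huv] at hk
  have : 2 * Fz (G.deleteEdges {s(u,v)})ᶜ
      = 2 * ((n:ℤ)*(r:ℤ) - 4*(r:ℤ) + 2 - ((n:ℤ)-2)^2) := by
    rw [← sub_eq_zero] at hk ⊢
    rw [← sub_eq_zero]
    nlinarith [hk]
  linarith

end delete

section iso
variable {G G' : SimpleGraph (Fin n)}

lemma iso_nbr (φ : G ≃g G') (v : Fin n) : nbr G' (φ v) = (nbr G v).image φ := by
  ext w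
  simp only [mem_nbr, Finset.mem_image]
  constructor
  · intro h
    refine ⟨φ.symm w, ?_, by simp⟩
    have h2 : G'.Adj (φ v) (φ (φ.symm w)) := by simpa using h
    exact φ.map_adj_iff.mp h2
  · rintro ⟨a, ha, rfl⟩
    exact φ.map_adj_iff.mpr ha

lemma iso_gdeg (φ : G ≃g G') (v : Fin n) : gdeg G' (φ v) = gdeg G v := by
  rw [gdeg_eq, gdeg_eq, iso_nbr φ v,
    Finset.card_image_of_injective _ φ.injective]

lemma iso_dz (φ : G ≃g G') (v : Fin n) : dz G' (φ v) = dz G v := by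
  unfold dz; rw [iso_gdeg]

lemma iso_s1 (φ : G ≃g G') : s1 G' = s1 G := by
  unfold s1
  rw [← Equiv.sum_comp φ.toEquiv (fun v => dz G' v)]
  exact Finset.sum_congr rfl fun v _ => iso_dz φ v

lemma iso_s2 (φ : G ≃g G') : s2 G' = s2 G := by
  unfold s2
  rw [← Equiv.sum_comp φ.toEquiv (fun v => dz G' v ^ 2)]
  exact Finset.sum_congr rfl fun v _ => by
    rw [show φ.toEquiv v = φ v from rfl, iso_dz φ v]

lemma iso_pz (φ : G ≃g G') : pz G' = pz G := by
  unfold pz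
  rw [← Equiv.sum_comp φ.toEquiv (fun v => ∑ w ∈ nbr G' v, dz G' v * dz G' w)]
  refine Finset.sum_congr rfl fun v _ => ?_
  rw [show φ.toEquiv v = φ v from rfl, iso_nbr φ v,
    Finset.sum_image (fun a _ b _ h => φ.injective h)]
  exact Finset.sum_congr rfl fun w _ => by rw [iso_dz φ v, iso_dz φ w]

lemma iso_gsize (φ : G ≃g G') : gsize G' = gsize G := by
  have h1 := s1_eq (n := n) G'
  have h2 := s1_eq (n := n) G
  rw [iso_s1 φ, h2] at h1
  omega

lemma iso_M1 (φ : G ≃g G') : zagrebM1 G' = zagrebM1 G := by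
  have h1 := s2_eq (n := n) G'
  have h2 := s2_eq (n := n) G
  rw [iso_s2 φ, h2] at h1
  omega

lemma iso_M2 (φ : G ≃g G') : zagrebM2 G' = zagrebM2 G := by
  have h1 := pz_eq (n := n) G'
  have h2 := pz_eq (n := n) G
  rw [iso_pz φ, h2] at h1
  omega

lemma iso_Fz (φ : G ≃g G') : Fz G' = Fz G := by
  unfold Fz
  rw [iso_gsize φ, iso_M1 φ, iso_M2 φ]

def isoCompl (φ : G ≃g G') : Gᶜ ≃g G'ᶜ where
  toEquiv := φ.toEquiv
  map_rel_iff' := by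
    intro a b
    simp only [SimpleGraph.compl_adj]
    constructor
    · rintro ⟨hne, hna⟩
      exact ⟨fun h => hne (h ▸ rfl), fun h => hna (φ.map_adj_iff.mpr h)⟩
    · rintro ⟨hne, hna⟩
      exact ⟨fun h => hne (φ.injective h), fun h => hna (φ.map_adj_iff.mp h)⟩

lemma iso_Fz_compl (φ : G ≃g G') : Fz G'ᶜ = Fz Gᶜ := iso_Fz (isoCompl φ)

end iso

section special
variable {m : ℕ}

lemma sum_ite3 {a b c : Fin m} (hab : a ≠ b) (hac : a ≠ c) (hbc : b ≠ c)
    (x1 x2 x3 : ℤ) :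
    ∑ v, (if v = a then x1 else if v = b then x2 else if v = c then x3 else 0)
      = x1 + x2 + x3 := by
  have hpt : ∀ v : Fin m,
      (if v = a then x1 else if v = b then x2 else if v = c then x3 else 0)
        = (if v = a then x1 else 0) + (if v = b then x2 else 0)
          + (if v = c then x3 else 0) := by
    intro v
    by_cases h1 : v = a
    · subst h1; simp [hab, hac]
    · by_cases h2 : v = b
      · subst h2; simp [h1, hbc]
      · by_cases h3 : v = c
        · subst h3; simp [h1, h2]
        · simp [h1, h2, h3]
  rw [Finset.sum_congr rfl (fun v _ => hpt v)]
  simp [Finset.sum_add_distrib]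

lemma sum_ite4 {a b c d : Fin m} (hab : a ≠ b) (hac : a ≠ c) (had : a ≠ d)
    (hbc : b ≠ c) (hbd : b ≠ d) (hcd : c ≠ d) (x1 x2 x3 x4 : ℤ) :
    ∑ v, (if v = a then x1 else if v = b then x2 else if v = c then x3
      else if v = d then x4 else 0) = x1 + x2 + x3 + x4 := by
  have hpt : ∀ v : Fin m,
      (if v = a then x1 else if v = b then x2 else if v = c then x3
        else if v = d then x4 else 0)
        = (if v = a then x1 else 0) + (if v = b then x2 else 0)
          + (if v = c then x3 else 0) + (if v = d then x4 else 0) := by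
    intro v
    by_cases h1 : v = a
    · subst h1; simp [hab, hac, had]
    · by_cases h2 : v = b
      · subst h2; simp [h1, hbc, hbd]
      · by_cases h3 : v = c
        · subst h3; simp [h1, h2, hcd]
        · by_cases h4 : v = d
          · subst h4; simp [h1, h2, h3]
          · simp [h1, h2, h3, h4]
  rw [Finset.sum_congr rfl (fun v _ => hpt v)]
  simp [Finset.sum_add_distrib]

end special

section SpecialGraphs
variable {n : ℕ}

def vA (hn : 3 < n) : Fin n := ⟨0, by omega⟩
def vB (hn : 3 < n) : Fin n := ⟨1, by omega⟩
def vC (hn : 3 < n) : Fin n := ⟨2, by omega⟩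
def vD (hn : 3 < n) : Fin n := ⟨3, by omega⟩

lemma vAB (hn : 3 < n) : vA hn ≠ vB hn := by simp [vA, vB, Fin.ext_iff]
lemma vAC (hn : 3 < n) : vA hn ≠ vC hn := by simp [vA, vC, Fin.ext_iff]
lemma vAD (hn : 3 < n) : vA hn ≠ vD hn := by simp [vA, vD, Fin.ext_iff]
lemma vBC (hn : 3 < n) : vB hn ≠ vC hn := by simp [vB, vC, Fin.ext_iff]
lemma vBD (hn : 3 < n) : vB hn ≠ vD hn := by simp [vB, vD, Fin.ext_iff]
lemma vCD (hn : 3 < n) : vC hn ≠ vD hn := by simp [vC, vD, Fin.ext_iff]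

/-- path on 3 vertices plus isolated vertices -/
noncomputable def H0 (hn : 3 < n) : SimpleGraph (Fin n) :=
  SimpleGraph.fromEdgeSet {s(vA hn, vB hn), s(vA hn, vC hn)}

/-- paw graph plus isolated vertices -/
noncomputable def H1 (hn : 3 < n) : SimpleGraph (Fin n) :=
  SimpleGraph.fromEdgeSet
    {s(vA hn, vB hn), s(vA hn, vC hn), s(vB hn, vC hn), s(vC hn, vD hn)}

lemma nbr_H0 (hn : 3 < n) (x : Fin n) :
    nbr (H0 hn) x = if x = vA hn then {vB hn, vC hn}
      else if x = vB hn then {vA hn} else if x = vC hn then {vA hn} else ∅ := by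
  have h1 := vAB hn; have h2 := vAC hn; have h3 := vBC hn
  ext w
  simp only [mem_nbr, H0, SimpleGraph.fromEdgeSet_adj, Set.mem_insert_iff,
    Set.mem_singleton_iff, Sym2.eq_iff]
  split_ifs with e1 e2 e3 <;>
    simp_all [Finset.mem_insert, Finset.mem_singleton] <;> aesop

lemma dz_H0 (hn : 3 < n) (x : Fin n) :
    dz (H0 hn) x = if x = vA hn then 2
      else if x = vB hn then 1 else if x = vC hn then 1 else 0 := by
  have h1 := vAB hn; have h2 := vAC hn; have h3 := vBC hn
  rw [dz, gdeg_eq, nbr_H0 hn]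
  split_ifs <;> simp_all [Finset.card_insert_of_notMem]

lemma s1_H0 (hn : 3 < n) : s1 (H0 hn) = 4 := by
  unfold s1
  rw [Finset.sum_congr rfl (fun v _ => dz_H0 hn v),
    sum_ite3 (vAB hn) (vAC hn) (vBC hn)]
  norm_num

lemma s2_H0 (hn : 3 < n) : s2 (H0 hn) = 6 := by
  unfold s2
  have hpt : ∀ v, dz (H0 hn) v ^ 2 = if v = vA hn then 4
      else if v = vB hn then 1 else if v = vC hn then 1 else 0 := by
    intro v
    rw [dz_H0 hn v]
    split_ifs <;> norm_num
  rw [Finset.sum_congr rfl (fun v _ => hpt v), sum_ite3 (vAB hn) (vAC hn) (vBC hn)]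
  norm_num

lemma pz_H0 (hn : 3 < n) : pz (H0 hn) = 8 := by
  unfold pz
  have hA := vAB hn; have hB := vAC hn; have hC := vBC hn
  have hpt : ∀ v, ∑ w ∈ nbr (H0 hn) v, dz (H0 hn) v * dz (H0 hn) w
      = if v = vA hn then 4 else if v = vB hn then 2 else if v = vC hn then 2 else 0 := by
    intro v
    rw [nbr_H0 hn]
    split_ifs with e1 e2 e3
    · subst e1
      rw [Finset.sum_pair hC]
      rw [dz_H0, dz_H0, dz_H0]
      simp [hA, hB, hC, hA.symm, hB.symm, hC.symm]
    · subst e2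
      rw [Finset.sum_singleton, dz_H0, dz_H0]
      simp [hA, hB, hC, hA.symm, hB.symm, hC.symm, e1]
    · subst e3
      rw [Finset.sum_singleton, dz_H0, dz_H0]
      simp [hA, hB, hC, hA.symm, hB.symm, hC.symm, e1, e2]
    · simp
  rw [Finset.sum_congr rfl (fun v _ => hpt v), sum_ite3 (vAB hn) (vAC hn) (vBC hn)]
  norm_num

lemma Fz_H0 (hn : 3 < n) : 2 * Fz (H0 hn) = 24 - 8 * (n:ℤ) := by
  rw [two_Fz, s1_H0 hn, s2_H0 hn, pz_H0 hn]
  ring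

lemma Fz_H0_neg (hn : 3 < n) : Fz (H0 hn) < 0 := by
  have h := Fz_H0 hn
  have hn' : (4:ℤ) ≤ (n:ℤ) := by exact_mod_cast hn
  linarith

lemma Fz_H0_compl_neg (hn : 3 < n) : Fz (H0 hn)ᶜ < 0 := by
  have hk := key_identity (H0 hn)
  rw [s1_H0 hn, s2_H0 hn, Fz_H0 hn] at hk
  have hn' : (4:ℤ) ≤ (n:ℤ) := by exact_mod_cast hn
  nlinarith [sq_nonneg ((n:ℤ) - 3)]

lemma nbr_H1 (hn : 3 < n) (x : Fin n) :
    nbr (H1 hn) x = if x = vA hn then {vB hn, vC hn}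
      else if x = vB hn then {vA hn, vC hn}
      else if x = vC hn then {vA hn, vB hn, vD hn}
      else if x = vD hn then {vC hn} else ∅ := by
  have h1 := vAB hn; have h2 := vAC hn; have h3 := vBC hn
  have h4 := vAD hn; have h5 := vBD hn; have h6 := vCD hn
  ext w
  simp only [mem_nbr, H1, SimpleGraph.fromEdgeSet_adj, Set.mem_insert_iff,
    Set.mem_singleton_iff, Sym2.eq_iff]
  split_ifs with e1 e2 e3 e4 <;>
    simp_all [Finset.mem_insert, Finset.mem_singleton] <;> aesop

lemma dz_H1 (hn : 3 < n) (x : Fin n) :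
    dz (H1 hn) x = if x = vA hn then 2
      else if x = vB hn then 2 else if x = vC hn then 3
      else if x = vD hn then 1 else 0 := by
  have h1 := vAB hn; have h2 := vAC hn; have h3 := vBC hn
  have h4 := vAD hn; have h5 := vBD hn; have h6 := vCD hn
  rw [dz, gdeg_eq, nbr_H1 hn]
  split_ifs <;> simp_all [Finset.card_insert_of_notMem]

lemma s1_H1 (hn : 3 < n) : s1 (H1 hn) = 8 := by
  unfold s1
  rw [Finset.sum_congr rfl (fun v _ => dz_H1 hn v),
    sum_ite4 (vAB hn) (vAC hn) (vAD hn) (vBC hn) (vBD hn) (vCD hn)]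
  norm_num

lemma s2_H1 (hn : 3 < n) : s2 (H1 hn) = 18 := by
  unfold s2
  have hpt : ∀ v, dz (H1 hn) v ^ 2 = if v = vA hn then 4
      else if v = vB hn then 4 else if v = vC hn then 9
      else if v = vD hn then 1 else 0 := by
    intro v
    rw [dz_H1 hn v]
    split_ifs <;> norm_num
  rw [Finset.sum_congr rfl (fun v _ => hpt v),
    sum_ite4 (vAB hn) (vAC hn) (vAD hn) (vBC hn) (vBD hn) (vCD hn)]
  norm_num

lemma pz_H1 (hn : 3 < n) : pz (H1 hn) = 38 := by
  unfold pz
  have hA := vAB hn; have hB := vAC hn; have hC := vBC hn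
  have hD := vAD hn; have hE := vBD hn; have hF := vCD hn
  have hpt : ∀ v, ∑ w ∈ nbr (H1 hn) v, dz (H1 hn) v * dz (H1 hn) w
      = if v = vA hn then 10 else if v = vB hn then 10
        else if v = vC hn then 15 else if v = vD hn then 3 else 0 := by
    intro v
    rw [nbr_H1 hn]
    split_ifs with e1 e2 e3 e4
    · subst e1
      rw [Finset.sum_pair hC]
      rw [dz_H1, dz_H1, dz_H1]
      simp [hA, hB, hC, hD, hE, hF, hA.symm, hB.symm, hC.symm, hD.symm, hE.symm, hF.symm]
    · subst e2
      rw [Finset.sum_pair hB]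
      rw [dz_H1, dz_H1, dz_H1]
      simp [hA, hB, hC, hD, hE, hF, hA.symm, hB.symm, hC.symm, hD.symm, hE.symm, hF.symm, e1]
    · subst e3
      have : ({vA hn, vB hn, vD hn} : Finset (Fin n)) = insert (vA hn) {vB hn, vD hn} := rfl
      rw [this, Finset.sum_insert (by simp [hA, hD]), Finset.sum_pair hE]
      rw [dz_H1, dz_H1, dz_H1, dz_H1]
      simp [hA, hB, hC, hD, hE, hF, hA.symm, hB.symm, hC.symm, hD.symm, hE.symm, hF.symm,
        e1, e2]
    · subst e4
      rw [Finset.sum_singleton, dz_H1, dz_H1]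
      simp [hA, hB, hC, hD, hE, hF, hA.symm, hB.symm, hC.symm, hD.symm, hE.symm, hF.symm,
        e1, e2, e3]
    · simp
  rw [Finset.sum_congr rfl (fun v _ => hpt v),
    sum_ite4 (vAB hn) (vAC hn) (vAD hn) (vBC hn) (vBD hn) (vCD hn)]
  norm_num

lemma Fz_H1 (hn : 3 < n) : 2 * Fz (H1 hn) = 144 - 38 * (n:ℤ) := by
  rw [two_Fz, s1_H1 hn, s2_H1 hn, pz_H1 hn]
  ring

lemma Fz_H1_neg (hn : 3 < n) : Fz (H1 hn) < 0 := by
  have h := Fz_H1 hn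
  have hn' : (4:ℤ) ≤ (n:ℤ) := by exact_mod_cast hn
  linarith

lemma Fz_H1_compl_neg (hn : 3 < n) : Fz (H1 hn)ᶜ < 0 := by
  have hk := key_identity (H1 hn)
  rw [s1_H1 hn, s2_H1 hn, Fz_H1 hn] at hk
  have hn' : (4:ℤ) ≤ (n:ℤ) := by exact_mod_cast hn
  nlinarith [sq_nonneg ((n:ℤ) - 4), sq_nonneg ((n:ℤ) - 3)]

end SpecialGraphs

end ZagrebAux


namespace ZagrebAux
open scoped Classical
variable {n : ℕ}

noncomputable def cF : IsoClasses n → ℤ :=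
  Quotient.lift Fz (fun G H h => h.elim fun φ => (iso_Fz φ).symm)

noncomputable def cW : IsoClasses n → ℤ :=
  Quotient.lift (fun G => Fz Gᶜ) (fun G H h => h.elim fun φ => (iso_Fz_compl φ).symm)

noncomputable def cs1 : IsoClasses n → ℤ :=
  Quotient.lift s1 (fun G H h => h.elim fun φ => (iso_s1 φ).symm)

noncomputable def cs2 : IsoClasses n → ℤ :=
  Quotient.lift s2 (fun G H h => h.elim fun φ => (iso_s2 φ).symm)

lemma cF_mk (G : SimpleGraph (Fin n)) : cF (Quotient.mk (graphIsoSetoid n) G) = Fz G := rfl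
lemma cW_mk (G : SimpleGraph (Fin n)) : cW (Quotient.mk (graphIsoSetoid n) G) = Fz Gᶜ := rfl
lemma cs1_mk (G : SimpleGraph (Fin n)) : cs1 (Quotient.mk (graphIsoSetoid n) G) = s1 G := rfl
lemma cs2_mk (G : SimpleGraph (Fin n)) : cs2 (Quotient.mk (graphIsoSetoid n) G) = s2 G := rfl

lemma cF_out (q : IsoClasses n) : cF q = Fz (Quotient.out q) := by
  conv_lhs => rw [← Quotient.out_eq q]
  rfl

lemma Fz_nat (G : SimpleGraph (Fin n)) :
    Fz G = ((gsize G * zagrebM1 G : ℕ) : ℤ) - ((n * zagrebM2 G : ℕ) : ℤ) := by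
  unfold Fz; push_cast; ring

lemma mem_isoClassesOf_iff {P : SimpleGraph (Fin n) → Prop}
    (hP : ∀ G H, (G ≃g H) → (P G ↔ P H)) (q : IsoClasses n) :
    q ∈ isoClassesOf n P ↔ P (Quotient.out q) := by
  constructor
  · rintro ⟨G, hG, rfl⟩
    obtain ⟨φ⟩ := Quotient.mk_out (s := graphIsoSetoid n) G
    exact (hP _ _ φ).mpr hG
  · intro h
    exact ⟨Quotient.out q, h, Quotient.out_eq q⟩

lemma setA_eq (A : Set (IsoClasses n))
    (hA : A = isoClassesOf n fun G => gsize G * zagrebM1 G > n * zagrebM2 G) :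
    A = {q | 0 < cF q} := by
  subst hA
  ext q
  rw [mem_isoClassesOf_iff (fun G H φ => by
    rw [iso_gsize φ, iso_M1 φ, iso_M2 φ])]
  have h := Fz_nat (Quotient.out q)
  rw [Set.mem_setOf_eq, cF_out]
  omega

lemma setB_eq (B : Set (IsoClasses n))
    (hB : B = isoClassesOf n fun G => gsize G * zagrebM1 G = n * zagrebM2 G) :
    B = {q | cF q = 0} := by
  subst hB
  ext q
  rw [mem_isoClassesOf_iff (fun G H φ => by
    rw [iso_gsize φ, iso_M1 φ, iso_M2 φ])]
  have h := Fz_nat (Quotient.out q)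
  rw [Set.mem_setOf_eq, cF_out]
  omega

lemma setC_eq (C : Set (IsoClasses n))
    (hC : C = isoClassesOf n fun G => gsize G * zagrebM1 G < n * zagrebM2 G) :
    C = {q | cF q < 0} := by
  subst hC
  ext q
  rw [mem_isoClassesOf_iff (fun G H φ => by
    rw [iso_gsize φ, iso_M1 φ, iso_M2 φ])]
  have h := Fz_nat (Quotient.out q)
  rw [Set.mem_setOf_eq, cF_out]
  omega

/-- the injection from `A ∪ B` into `C` -/
noncomputable def Phi (hn : 3 < n) : IsoClasses n → IsoClasses n := fun q =>
  if hreg : gregular (Quotient.out q) then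
    if h : ∃ p : Fin n × Fin n, (Quotient.out q).Adj p.1 p.2 then
      Quotient.mk (graphIsoSetoid n)
        ((Quotient.out q).deleteEdges {s((Classical.choose h).1, (Classical.choose h).2)})
    else Quotient.mk (graphIsoSetoid n) (H0 hn)
  else Quotient.mk (graphIsoSetoid n) (Quotient.out q)ᶜ

lemma no_edge_bot {G : SimpleGraph (Fin n)} (h : ¬ ∃ p : Fin n × Fin n, G.Adj p.1 p.2) :
    G = ⊥ := by
  push_neg at h
  ext a b
  simp only [SimpleGraph.bot_adj, iff_false]
  exact h (a, b)

lemma gdeg_ge_one {G : SimpleGraph (Fin n)} {u v : Fin n} (huv : G.Adj u v) :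
    1 ≤ gdeg G u := by
  rw [gdeg_eq]
  exact Finset.card_pos.mpr ⟨v, mem_nbr.mpr huv⟩

lemma gdeg_add_one_le {G : SimpleGraph (Fin n)} (x : Fin n) : gdeg G x + 1 ≤ n := by
  have hx : x ∉ nbr G x := fun h => G.irrefl (mem_nbr.mp h)
  have h := Finset.card_le_card (Finset.subset_univ (insert x (nbr G x)))
  rw [Finset.card_insert_of_notMem hx] at h
  simpa [gdeg_eq] using h

lemma adj_del_iff {G : SimpleGraph (Fin n)} {u v : Fin n} (huv : G.Adj u v) (a b : Fin n) :
    G.Adj a b ↔ ((G.deleteEdges {s(u,v)}).Adj a b ∨ (a = u ∧ b = v) ∨ (a = v ∧ b = u)) := by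
  constructor
  · intro h
    by_cases hc : s(a,b) = s(u,v)
    · right
      exact Sym2.eq_iff.mp hc
    · left
      rw [SimpleGraph.deleteEdges_adj]
      exact ⟨h, by simpa [Set.mem_singleton_iff] using hc⟩
  · rintro (h | ⟨rfl, rfl⟩ | ⟨rfl, rfl⟩)
    · exact (SimpleGraph.deleteEdges_adj.mp h).1
    · exact huv
    · exact huv.symm

lemma cz_eq_one {u v x : Fin n} (h : cz u v x = 1) : x = u ∨ x = v := by
  by_contra hc
  push_neg at hc
  simp [cz, hc.1, hc.2] at h

lemma del_inj (hn : 3 < n) {G1 G2 : SimpleGraph (Fin n)} {r1 r2 : ℕ} {u1 v1 u2 v2 : Fin n}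
    (hr1 : ∀ x, gdeg G1 x = r1) (hr2 : ∀ x, gdeg G2 x = r2)
    (h1 : G1.Adj u1 v1) (h2 : G2.Adj u2 v2)
    (φ : (G1.deleteEdges {s(u1,v1)}) ≃g (G2.deleteEdges {s(u2,v2)})) :
    Nonempty (G1 ≃g G2) := by
  have hs1 := iso_s1 φ
  rw [s1_del hr1 h1, s1_del hr2 h2] at hs1
  have hn0 : (0:ℤ) < (n:ℤ) := by exact_mod_cast (by omega : 0 < n)
  have hrr : r2 = r1 := by
    have : (n:ℤ) * r2 = (n:ℤ) * r1 := by linarith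
    have := mul_left_cancel₀ (by linarith) this
    exact_mod_cast this
  subst hrr
  set r := r2 with hrdef
  set H1' := G1.deleteEdges {s(u1,v1)} with hH1
  set H2' := G2.deleteEdges {s(u2,v2)} with hH2
  have hdz : ∀ x, dz H2' (φ x) = dz H1' x := iso_dz φ
  have hcz : ∀ x, cz u2 v2 (φ x) = cz u1 v1 x := by
    intro x
    have h := hdz x
    have hA : dz H1' x = (r:ℤ) - cz u1 v1 x := dz_del hr1 h1 x
    have hB : dz H2' (φ x) = (r:ℤ) - cz u2 v2 (φ x) := dz_del hr2 h2 (φ x)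
    linarith
  have hu : φ u1 = u2 ∨ φ u1 = v2 := by
    apply cz_eq_one
    rw [hcz u1, cz_u]
  have hv : φ v1 = u2 ∨ φ v1 = v2 := by
    apply cz_eq_one
    rw [hcz v1, cz_v]
  have hnephi : φ u1 ≠ φ v1 := fun h => (G1.ne_of_adj h1) (φ.injective h)
  have hinj := φ.injective
  -- pair correspondence
  have hpair : (φ u1 = u2 ∧ φ v1 = v2) ∨ (φ u1 = v2 ∧ φ v1 = u2) := by
    rcases hu with hu | hu <;> rcases hv with hv | hv
    · exact absurd (hu.trans hv.symm) hnephi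
    · exact Or.inl ⟨hu, hv⟩
    · exact Or.inr ⟨hu, hv⟩
    · exact absurd (hu.trans hv.symm) hnephi
  have hadj : ∀ a b : Fin n, G2.Adj (φ a) (φ b) ↔ G1.Adj a b := by
    intro a b
    rw [adj_del_iff h1 a b, adj_del_iff h2 (φ a) (φ b)]
    have hH : (G2.deleteEdges {s(u2,v2)}).Adj (φ a) (φ b) ↔ H1'.Adj a b :=
      φ.map_adj_iff
    rw [hH]
    have hpairiff : ((φ a = u2 ∧ φ b = v2) ∨ (φ a = v2 ∧ φ b = u2))
        ↔ ((a = u1 ∧ b = v1) ∨ (a = v1 ∧ b = u1)) := by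
      rcases hpair with ⟨pu, pv⟩ | ⟨pu, pv⟩
      · rw [← pu, ← pv]
        simp only [hinj.eq_iff]
      · rw [← pu, ← pv]
        simp only [hinj.eq_iff]
        tauto
    rw [hpairiff]
  exact ⟨⟨φ.toEquiv, fun {a b} => hadj a b⟩⟩

lemma Phi_del_case (hn : 3 < n) (q : IsoClasses n) (hreg : gregular (Quotient.out q))
    (h : ∃ p : Fin n × Fin n, (Quotient.out q).Adj p.1 p.2) :
    Phi hn q = Quotient.mk (graphIsoSetoid n)
      ((Quotient.out q).deleteEdges
        {s((Classical.choose h).1, (Classical.choose h).2)}) := by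
  unfold Phi
  exact (dif_pos hreg).trans (dif_pos h)

lemma Phi_H0_case (hn : 3 < n) (q : IsoClasses n) (hreg : gregular (Quotient.out q))
    (h : ¬ ∃ p : Fin n × Fin n, (Quotient.out q).Adj p.1 p.2) :
    Phi hn q = Quotient.mk (graphIsoSetoid n) (H0 hn) := by
  unfold Phi
  exact (dif_pos hreg).trans (dif_neg h)

lemma Phi_compl_case (hn : 3 < n) (q : IsoClasses n) (hreg : ¬ gregular (Quotient.out q)) :
    Phi hn q = Quotient.mk (graphIsoSetoid n) (Quotient.out q)ᶜ := by
  unfold Phi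
  exact dif_neg hreg

lemma Fz_compl_neg_of_nonreg (hn : 3 < n) {G : SimpleGraph (Fin n)}
    (hreg : ¬ gregular G) (hF : 0 ≤ Fz G) : Fz Gᶜ < 0 := by
  have hcs := cs_strict G (by omega) (fun ⟨r, hr⟩ => hreg ⟨r, hr⟩)
  have hk := key_identity G
  have hn4 : (4:ℤ) ≤ (n:ℤ) := by exact_mod_cast hn
  have hprod : 0 < ((n:ℤ) - 2) * ((n:ℤ) * s2 G - s1 G ^ 2) :=
    mul_pos (by linarith) hcs
  linarith

lemma Fz_del_neg (hn : 3 < n) {G : SimpleGraph (Fin n)} {r : ℕ} {u v : Fin n}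
    (hr : ∀ x, gdeg G x = r) (huv : G.Adj u v) :
    Fz (G.deleteEdges {s(u,v)}) < 0 := by
  rw [Fz_del hn hr huv]
  have hn4 : (4:ℤ) ≤ (n:ℤ) := by exact_mod_cast hn
  have hr0 : (0:ℤ) ≤ (r:ℤ) := by positivity
  nlinarith [mul_nonneg hr0 (by linarith : (0:ℤ) ≤ (n:ℤ) - 4)]

lemma Fz_del_compl_neg (hn : 3 < n) {G : SimpleGraph (Fin n)} {r : ℕ} {u v : Fin n}
    (hr : ∀ x, gdeg G x = r) (huv : G.Adj u v) :
    Fz (G.deleteEdges {s(u,v)})ᶜ < 0 := by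
  rw [Fz_del_compl hn hr huv]
  have hn4 : (4:ℤ) ≤ (n:ℤ) := by exact_mod_cast hn
  have hrle : (r:ℤ) ≤ (n:ℤ) - 1 := by
    have := gdeg_add_one_le (G := G) u
    rw [hr u] at this
    exact_mod_cast (by omega : (r:ℤ) + 1 ≤ (n:ℤ) → (r:ℤ) ≤ (n:ℤ) - 1)
      (by exact_mod_cast this)
  nlinarith [mul_le_mul_of_nonneg_right hrle (by linarith : (0:ℤ) ≤ (n:ℤ) - 4)]

lemma Phi_mapsTo (hn : 3 < n) {q : IsoClasses n} (hq : 0 ≤ cF q) :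
    cF (Phi hn q) < 0 ∧ Phi hn q ≠ Quotient.mk (graphIsoSetoid n) (H1 hn) := by
  by_cases hreg : gregular (Quotient.out q)
  · by_cases h : ∃ p : Fin n × Fin n, (Quotient.out q).Adj p.1 p.2
    · rw [Phi_del_case hn q hreg h]
      obtain ⟨r, hr⟩ := hreg
      have huv := Classical.choose_spec h
      constructor
      · rw [cF_mk]
        exact Fz_del_neg hn hr huv
      · intro heq
        have e1 := congrArg cs1 heq
        have e2 := congrArg cs2 heq
        rw [cs1_mk, cs1_mk, s1_del hr huv, s1_H1 hn] at e1
        rw [cs2_mk, cs2_mk, s2_del hr huv, s2_H1 hn] at e2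
        have e3 : (n:ℤ) * (r:ℤ) = 10 := by linarith
        have e4 : (n:ℤ) * (r:ℤ)^2 = 10 * (r:ℤ) := by rw [pow_two, ← mul_assoc, e3]
        have e5 : 6 * (r:ℤ) = 16 := by linarith
        omega
    · rw [Phi_H0_case hn q hreg h]
      constructor
      · rw [cF_mk]
        exact Fz_H0_neg hn
      · intro heq
        have e1 := congrArg cs1 heq
        rw [cs1_mk, cs1_mk, s1_H0 hn, s1_H1 hn] at e1
        norm_num at e1
  · rw [Phi_compl_case hn q hreg]
    have hq' : 0 ≤ Fz (Quotient.out q) := by rwa [cF_out] at hq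
    constructor
    · rw [cF_mk]
      exact Fz_compl_neg_of_nonreg hn hreg hq'
    · intro heq
      have e1 := congrArg cW heq
      rw [cW_mk, cW_mk, compl_compl] at e1
      have := Fz_H1_compl_neg hn
      linarith

lemma Phi_injOn (hn : 3 < n) {q1 q2 : IsoClasses n} (hq1 : 0 ≤ cF q1) (hq2 : 0 ≤ cF q2)
    (heq : Phi hn q1 = Phi hn q2) : q1 = q2 := by
  by_cases hreg1 : gregular (Quotient.out q1) <;>
    by_cases hreg2 : gregular (Quotient.out q2)
  · -- both regular
    by_cases h1 : ∃ p : Fin n × Fin n, (Quotient.out q1).Adj p.1 p.2 <;>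
      by_cases h2 : ∃ p : Fin n × Fin n, (Quotient.out q2).Adj p.1 p.2
    · -- both have an edge : reconstruction
      rw [Phi_del_case hn q1 hreg1 h1, Phi_del_case hn q2 hreg2 h2] at heq
      obtain ⟨r1, hr1⟩ := hreg1
      obtain ⟨r2, hr2⟩ := hreg2
      obtain ⟨φ⟩ := Quotient.exact heq
      have hiso := del_inj hn hr1 hr2 (Classical.choose_spec h1) (Classical.choose_spec h2) φ
      rw [← Quotient.out_eq q1, ← Quotient.out_eq q2]
      exact Quotient.sound hiso
    · -- edge vs empty : impossible by invariants
      rw [Phi_del_case hn q1 hreg1 h1, Phi_H0_case hn q2 hreg2 h2] at heq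
      obtain ⟨r, hr⟩ := hreg1
      have huv := Classical.choose_spec h1
      have e1 := congrArg cs1 heq
      have e2 := congrArg cs2 heq
      rw [cs1_mk, cs1_mk, s1_del hr huv, s1_H0 hn] at e1
      rw [cs2_mk, cs2_mk, s2_del hr huv, s2_H0 hn] at e2
      have e3 : (n:ℤ) * (r:ℤ) = 6 := by linarith
      have e4 : (n:ℤ) * (r:ℤ)^2 = 6 * (r:ℤ) := by rw [pow_two, ← mul_assoc, e3]
      have e5 : 2 * (r:ℤ) = 4 := by linarith
      have e6 : (r:ℤ) = 2 := by linarith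
      rw [e6] at e3
      have : (n:ℤ) = 3 := by linarith
      have : n = 3 := by exact_mod_cast this
      omega
    · -- empty vs edge : symmetric
      rw [Phi_H0_case hn q1 hreg1 h1, Phi_del_case hn q2 hreg2 h2] at heq
      obtain ⟨r, hr⟩ := hreg2
      have huv := Classical.choose_spec h2
      have e1 := congrArg cs1 heq
      have e2 := congrArg cs2 heq
      rw [cs1_mk, cs1_mk, s1_del hr huv, s1_H0 hn] at e1
      rw [cs2_mk, cs2_mk, s2_del hr huv, s2_H0 hn] at e2
      have e3 : (n:ℤ) * (r:ℤ) = 6 := by linarith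
      have e4 : (n:ℤ) * (r:ℤ)^2 = 6 * (r:ℤ) := by rw [pow_two, ← mul_assoc, e3]
      have e5 : 2 * (r:ℤ) = 4 := by linarith
      have e6 : (r:ℤ) = 2 := by linarith
      rw [e6] at e3
      have : (n:ℤ) = 3 := by linarith
      have : n = 3 := by exact_mod_cast this
      omega
    · -- both empty
      have hb1 := no_edge_bot h1
      have hb2 := no_edge_bot h2
      rw [← Quotient.out_eq q1, ← Quotient.out_eq q2, hb1, hb2]
  · -- q1 regular, q2 not
    rw [Phi_compl_case hn q2 hreg2] at heq
    have hq2' : 0 ≤ Fz (Quotient.out q2) := by rwa [cF_out] at hq2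
    by_cases h1 : ∃ p : Fin n × Fin n, (Quotient.out q1).Adj p.1 p.2
    · rw [Phi_del_case hn q1 hreg1 h1] at heq
      obtain ⟨r, hr⟩ := hreg1
      have huv := Classical.choose_spec h1
      have e1 := congrArg cW heq
      rw [cW_mk, cW_mk, compl_compl] at e1
      have := Fz_del_compl_neg hn hr huv
      linarith
    · rw [Phi_H0_case hn q1 hreg1 h1] at heq
      have e1 := congrArg cW heq
      rw [cW_mk, cW_mk, compl_compl] at e1
      have := Fz_H0_compl_neg hn
      linarith
  · -- q2 regular, q1 not
    rw [Phi_compl_case hn q1 hreg1] at heq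
    have hq1' : 0 ≤ Fz (Quotient.out q1) := by rwa [cF_out] at hq1
    by_cases h2 : ∃ p : Fin n × Fin n, (Quotient.out q2).Adj p.1 p.2
    · rw [Phi_del_case hn q2 hreg2 h2] at heq
      obtain ⟨r, hr⟩ := hreg2
      have huv := Classical.choose_spec h2
      have e1 := congrArg cW heq
      rw [cW_mk, cW_mk, compl_compl] at e1
      have := Fz_del_compl_neg hn hr huv
      linarith
    · rw [Phi_H0_case hn q2 hreg2 h2] at heq
      have e1 := congrArg cW heq
      rw [cW_mk, cW_mk, compl_compl] at e1
      have := Fz_H0_compl_neg hn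
      linarith
  · -- both nonregular
    rw [Phi_compl_case hn q1 hreg1, Phi_compl_case hn q2 hreg2] at heq
    obtain ⟨φ⟩ := Quotient.exact heq
    have ψ := isoCompl φ
    rw [compl_compl, compl_compl] at ψ
    rw [← Quotient.out_eq q1, ← Quotient.out_eq q2]
    exact Quotient.sound ⟨ψ⟩

end ZagrebAux

/-- For `n > 3`, with `A`, `B`, `C` the sets of isomorphism classes of
graphs of order `n` and size `m` satisfying `m·M1 > n·M2`, `m·M1 = n·M2`, and
`m·M1 < n·M2` respectively, one has `|A| + |B| < |C|`. -/
theorem stmt_10 (n : ℕ) (hn : 3 < n)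
    (A : Set (IsoClasses n)) (B : Set (IsoClasses n)) (C : Set (IsoClasses n))
    (hA : A = isoClassesOf n fun G => gsize G * zagrebM1 G > n * zagrebM2 G)
    (hB : B = isoClassesOf n fun G => gsize G * zagrebM1 G = n * zagrebM2 G)
    (hC : C = isoClassesOf n fun G => gsize G * zagrebM1 G < n * zagrebM2 G) :
    A.ncard + B.ncard < C.ncard := by
  classical
  haveI : Finite (IsoClasses n) := Quotient.finite _
  have hAs := ZagrebAux.setA_eq A hA
  have hBs := ZagrebAux.setB_eq B hB
  have hCs := ZagrebAux.setC_eq C hC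
  set S : Set (IsoClasses n) := {q | 0 ≤ ZagrebAux.cF q} with hSdef
  have hUnion : A ∪ B = S := by
    rw [hAs, hBs]
    ext q
    simp only [Set.mem_union, Set.mem_setOf_eq, hSdef]
    omega
  have hdisj : Disjoint A B := by
    rw [hAs, hBs, Set.disjoint_left]
    intro q h1 h2
    simp only [Set.mem_setOf_eq] at h1 h2
    omega
  have hcard : A.ncard + B.ncard = S.ncard := by
    rw [← hUnion, Set.ncard_union_eq hdisj (Set.toFinite A) (Set.toFinite B)]
  have hmaps : ∀ q ∈ S, ZagrebAux.Phi hn q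
      ∈ C \ {Quotient.mk (graphIsoSetoid n) (ZagrebAux.H1 hn)} := by
    intro q hq
    obtain ⟨hneg, hne⟩ := ZagrebAux.Phi_mapsTo hn hq
    constructor
    · rw [hCs]
      exact hneg
    · exact hne
  have himg : (ZagrebAux.Phi hn '' S).ncard = S.ncard :=
    Set.ncard_image_of_injOn (fun q1 h1 q2 h2 e => ZagrebAux.Phi_injOn hn h1 h2 e)
  have hsub : ZagrebAux.Phi hn '' S
      ⊆ C \ {Quotient.mk (graphIsoSetoid n) (ZagrebAux.H1 hn)} := by
    rintro _ ⟨q, hq, rfl⟩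
    exact hmaps q hq
  have hle : (ZagrebAux.Phi hn '' S).ncard
      ≤ (C \ {Quotient.mk (graphIsoSetoid n) (ZagrebAux.H1 hn)}).ncard :=
    Set.ncard_le_ncard hsub (Set.toFinite _)
  have hmemH1C : Quotient.mk (graphIsoSetoid n) (ZagrebAux.H1 hn) ∈ C := by
    rw [hCs]
    exact ZagrebAux.Fz_H1_neg hn
  have hlt : (C \ {Quotient.mk (graphIsoSetoid n) (ZagrebAux.H1 hn)}).ncard < C.ncard :=
    Set.ncard_diff_singleton_lt_of_mem hmemH1C (Set.toFinite C)
  omega
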